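/- arXiv:math/0703387 — 2 statements merged into one kernel-verified Lean document; each statement's English description precedes it below -/
import Mathlib

section
/- Inscribed Ellipse Lemma: Let K be a subset of a real vector space X, x ∈ K, and suppose the ellipse r(t) = (cos t)·a + b(sin t)·y + x − a (t ∈ [−π,π)) lies inside K, where a ∈ X, y ∈ X, b > 0. Then for any polynomial p : X → ℝ of degree at most n, |⟨Dp(x), y⟩| ≤ (n/b)·√(‖p‖_K² − p(x)²), where Dp(x) is the derivative of p at x and ‖p‖_K := sup_K |p|. -/
open scoped BigOperators
open Finset Real Polynomial Complex

set_option maxHeartbeats 1000000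

/-- real trigonometric polynomial of degree ≤ n -/
def Trig (n : ℕ) (f : ℝ → ℝ) : Prop :=
  ∃ A B : ℕ → ℝ, ∀ t, f t = ∑ k ∈ range (n+1),
    (A k * Real.cos (k * t) + B k * Real.sin (k * t))

lemma trig_const (n : ℕ) (c : ℝ) : Trig n (fun _ => c) := by
  refine ⟨fun k => if k = 0 then c else 0, fun _ => 0, fun t => ?_⟩
  rw [Finset.sum_eq_single 0]
  · simp
  · intro k _ hk; simp [hk]
  · simp

lemma trig_add {n f g} (hf : Trig n f) (hg : Trig n g) : Trig n (fun t => f t + g t) := by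
  obtain ⟨A, B, hA⟩ := hf; obtain ⟨C, D, hC⟩ := hg
  refine ⟨A + C, B + D, fun t => ?_⟩
  simp only [hA, hC, ← Finset.sum_add_distrib]
  apply Finset.sum_congr rfl; intro k _; simp; ring

lemma trig_smul {n f} (c : ℝ) (hf : Trig n f) : Trig n (fun t => c * f t) := by
  obtain ⟨A, B, hA⟩ := hf
  refine ⟨fun k => c * A k, fun k => c * B k, fun t => ?_⟩
  simp only [hA, Finset.mul_sum]
  apply Finset.sum_congr rfl; intro k _; ring

lemma trig_mono {n m f} (h : n ≤ m) (hf : Trig n f) : Trig m f := by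
  obtain ⟨A, B, hA⟩ := hf
  refine ⟨fun k => if k ≤ n then A k else 0, fun k => if k ≤ n then B k else 0, fun t => ?_⟩
  rw [hA, ← Finset.sum_subset (Finset.range_subset_range.2 (by omega : n + 1 ≤ m + 1))]
  · apply Finset.sum_congr rfl; intro k hk; simp only [Finset.mem_range] at hk
    have hkn : k ≤ n := by omega
    simp [hkn]
  · intro k _ hk; simp only [Finset.mem_range, not_lt] at hk
    have hkn : ¬ k ≤ n := by omega
    simp [hkn]

lemma trig_sum {n : ℕ} {ι : Type*} (s : Finset ι) (F : ι → ℝ → ℝ)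
    (h : ∀ i ∈ s, Trig n (F i)) : Trig n (fun t => ∑ i ∈ s, F i t) := by
  classical
  induction s using Finset.induction with
  | empty => simpa using trig_const n 0
  | @insert a s hx ih =>
    simp only [Finset.sum_insert hx]
    exact trig_add (h a (by simp)) (ih fun i hi => h i (by simp [hi]))

lemma trig_cos_atom {k n : ℕ} (h : k ≤ n) : Trig n (fun t => Real.cos (k * t)) := by
  refine ⟨fun m => if m = k then 1 else 0, fun _ => 0, fun t => ?_⟩
  rw [Finset.sum_eq_single k]
  · simp
  · intro m _ hm; simp [hm]
  · intro hk; exact absurd (Finset.mem_range.2 (by omega)) hk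

lemma trig_sin_atom {k n : ℕ} (h : k ≤ n) : Trig n (fun t => Real.sin (k * t)) := by
  refine ⟨fun _ => 0, fun m => if m = k then 1 else 0, fun t => ?_⟩
  rw [Finset.sum_eq_single k]
  · simp
  · intro m _ hm; simp [hm]
  · intro hk; exact absurd (Finset.mem_range.2 (by omega)) hk

lemma trig_congr {n : ℕ} {f g : ℝ → ℝ} (h : ∀ t, f t = g t) (hf : Trig n f) : Trig n g := by
  obtain ⟨A, B, hA⟩ := hf; exact ⟨A, B, fun t => (h t) ▸ hA t⟩

lemma trig_cc {k n : ℕ} (h : k ≤ n) : Trig (n+1) (fun t => Real.cos t * Real.cos (k * t)) := by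
  rcases Nat.eq_zero_or_pos k with rfl | hk
  · apply trig_congr (f := fun t => Real.cos ((1:ℕ) * t)) _ (trig_cos_atom (by omega))
    intro t; push_cast; rw [one_mul]; simp
  · apply trig_congr (f := fun t =>
      1/2 * Real.cos ((k+1 : ℕ) * t) + 1/2 * Real.cos ((k-1 : ℕ) * t))
    · intro t
      have h1 : ((k+1 : ℕ) : ℝ) * t = k * t + t := by push_cast; ring
      have h2 : ((k-1 : ℕ) : ℝ) * t = k * t - t := by rw [Nat.cast_sub hk]; push_cast; ring
      rw [h1, h2, Real.cos_add, Real.cos_sub]; ring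
    · exact trig_add (trig_smul _ (trig_cos_atom (by omega)))
        (trig_smul _ (trig_cos_atom (by omega)))

lemma trig_cs {k n : ℕ} (h : k ≤ n) : Trig (n+1) (fun t => Real.cos t * Real.sin (k * t)) := by
  rcases Nat.eq_zero_or_pos k with rfl | hk
  · apply trig_congr (f := fun _ => (0:ℝ)) _ (trig_const _ 0)
    intro t; simp
  · apply trig_congr (f := fun t =>
      1/2 * Real.sin ((k+1 : ℕ) * t) + 1/2 * Real.sin ((k-1 : ℕ) * t))
    · intro t
      have h1 : ((k+1 : ℕ) : ℝ) * t = k * t + t := by push_cast; ring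
      have h2 : ((k-1 : ℕ) : ℝ) * t = k * t - t := by rw [Nat.cast_sub hk]; push_cast; ring
      rw [h1, h2, Real.sin_add, Real.sin_sub]; ring
    · exact trig_add (trig_smul _ (trig_sin_atom (by omega)))
        (trig_smul _ (trig_sin_atom (by omega)))

lemma trig_sc {k n : ℕ} (h : k ≤ n) : Trig (n+1) (fun t => Real.sin t * Real.cos (k * t)) := by
  rcases Nat.eq_zero_or_pos k with rfl | hk
  · apply trig_congr (f := fun t => Real.sin ((1:ℕ) * t)) _ (trig_sin_atom (by omega))
    intro t; push_cast; rw [one_mul]; simp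
  · apply trig_congr (f := fun t =>
      1/2 * Real.sin ((k+1 : ℕ) * t) + (-(1/2)) * Real.sin ((k-1 : ℕ) * t))
    · intro t
      have h1 : ((k+1 : ℕ) : ℝ) * t = k * t + t := by push_cast; ring
      have h2 : ((k-1 : ℕ) : ℝ) * t = k * t - t := by rw [Nat.cast_sub hk]; push_cast; ring
      rw [h1, h2, Real.sin_add, Real.sin_sub]; ring
    · exact trig_add (trig_smul _ (trig_sin_atom (by omega)))
        (trig_smul _ (trig_sin_atom (by omega)))

lemma trig_ss {k n : ℕ} (h : k ≤ n) : Trig (n+1) (fun t => Real.sin t * Real.sin (k * t)) := by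
  rcases Nat.eq_zero_or_pos k with rfl | hk
  · apply trig_congr (f := fun _ => (0:ℝ)) _ (trig_const _ 0)
    intro t; simp
  · apply trig_congr (f := fun t =>
      1/2 * Real.cos ((k-1 : ℕ) * t) + (-(1/2)) * Real.cos ((k+1 : ℕ) * t))
    · intro t
      have h1 : ((k+1 : ℕ) : ℝ) * t = k * t + t := by push_cast; ring
      have h2 : ((k-1 : ℕ) : ℝ) * t = k * t - t := by rw [Nat.cast_sub hk]; push_cast; ring
      rw [h1, h2, Real.cos_add, Real.cos_sub]; ring
    · exact trig_add (trig_smul _ (trig_cos_atom (by omega)))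
        (trig_smul _ (trig_cos_atom (by omega)))

lemma trig_mul_cos {n f} (hf : Trig n f) : Trig (n+1) (fun t => Real.cos t * f t) := by
  obtain ⟨A, B, hA⟩ := hf
  apply trig_congr (f := fun t => ∑ k ∈ range (n+1),
    (A k * (Real.cos t * Real.cos (k * t)) + B k * (Real.cos t * Real.sin (k * t))))
  · intro t; rw [hA, Finset.mul_sum]; apply Finset.sum_congr rfl; intro k _; ring
  · apply trig_sum; intro k hk; simp only [Finset.mem_range] at hk
    exact trig_add (trig_smul _ (trig_cc (by omega))) (trig_smul _ (trig_cs (by omega)))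

lemma trig_mul_sin {n f} (hf : Trig n f) : Trig (n+1) (fun t => Real.sin t * f t) := by
  obtain ⟨A, B, hA⟩ := hf
  apply trig_congr (f := fun t => ∑ k ∈ range (n+1),
    (A k * (Real.sin t * Real.cos (k * t)) + B k * (Real.sin t * Real.sin (k * t))))
  · intro t; rw [hA, Finset.mul_sum]; apply Finset.sum_congr rfl; intro k _; ring
  · apply trig_sum; intro k hk; simp only [Finset.mem_range] at hk
    exact trig_add (trig_smul _ (trig_sc (by omega))) (trig_smul _ (trig_ss (by omega)))

lemma term_eval (a b' : ℝ) (n k : ℕ) (hk : k ≤ n) (t : ℝ) :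
    ((a : ℂ) / 2) * ((Complex.exp (t * Complex.I)) ^ (n + k) + (Complex.exp (t * Complex.I)) ^ (n - k)) +
    ((b' : ℂ) / (2 * Complex.I)) * ((Complex.exp (t * Complex.I)) ^ (n + k) - (Complex.exp (t * Complex.I)) ^ (n - k))
      = Complex.exp (n * t * Complex.I) *
        ((a : ℂ) * (Real.cos (k * t) : ℂ) + (b' : ℂ) * (Real.sin (k * t) : ℂ)) := by
  have e1 : (Complex.exp (t * Complex.I)) ^ (n + k)
      = Complex.exp (n * t * Complex.I) * (Complex.cos ((k : ℂ) * t) + Complex.sin ((k : ℂ) * t) * Complex.I) := by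
    rw [← Complex.exp_nat_mul, ← Complex.exp_mul_I, ← Complex.exp_add]
    congr 1; push_cast; ring
  have e2 : (Complex.exp (t * Complex.I)) ^ (n - k)
      = Complex.exp (n * t * Complex.I) * (Complex.cos ((k : ℂ) * t) - Complex.sin ((k : ℂ) * t) * Complex.I) := by
    have : Complex.cos ((k : ℂ) * t) - Complex.sin ((k : ℂ) * t) * Complex.I
        = Complex.cos (-((k : ℂ) * t)) + Complex.sin (-((k : ℂ) * t)) * Complex.I := by
      rw [Complex.cos_neg, Complex.sin_neg]; ring
    rw [this, ← Complex.exp_nat_mul, ← Complex.exp_mul_I, ← Complex.exp_add]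
    congr 1
    rw [Nat.cast_sub hk]; push_cast; ring
  have hcosr : (Real.cos ((k:ℝ) * t) : ℂ) = Complex.cos ((k : ℂ) * t) := by
    rw [Complex.ofReal_cos]; norm_cast
  have hsinr : (Real.sin ((k:ℝ) * t) : ℂ) = Complex.sin ((k : ℂ) * t) := by
    rw [Complex.ofReal_sin]; norm_cast
  rw [e1, e2, hcosr, hsinr]
  have hI : (Complex.I : ℂ) ≠ 0 := Complex.I_ne_zero
  field_simp
  ring

/-- If a trig polynomial of degree ≤ n vanishes at more than 2n+1 points within a window of
length < 2π, it vanishes identically. -/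
lemma trig_vanish {n : ℕ} {f : ℝ → ℝ} (hf : Trig n f) (S : Finset ℝ)
    (hS0 : ∀ s ∈ S, f s = 0) (hwin : ∀ s ∈ S, ∀ u ∈ S, |s - u| < 2 * π)
    (hcard : 2 * n + 1 < S.card) : ∀ t, f t = 0 := by
  obtain ⟨A, B, hA⟩ := hf
  classical
  set P : ℂ[X] := ∑ k ∈ range (n+1),
      (Polynomial.C ((A k : ℂ) / 2) * (X ^ (n + k) + X ^ (n - k)) +
       Polynomial.C ((B k : ℂ) / (2 * Complex.I)) * (X ^ (n + k) - X ^ (n - k))) with hP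
  have keval : ∀ t : ℝ, P.eval (Complex.exp (t * Complex.I)) =
      Complex.exp (n * t * Complex.I) * (f t : ℂ) := by
    intro t
    rw [hA]
    rw [hP]
    simp only [Polynomial.eval_finset_sum, Polynomial.eval_add, Polynomial.eval_mul,
      Polynomial.eval_C, Polynomial.eval_sub, Polynomial.eval_pow, Polynomial.eval_X]
    push_cast
    rw [Finset.mul_sum]
    apply Finset.sum_congr rfl
    intro k hk
    simp only [Finset.mem_range] at hk
    have := term_eval (A k) (B k) n k (by omega) t
    push_cast at this
    exact this
  -- degree bound
  have hdeg : P.natDegree ≤ 2 * n := by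
    apply Polynomial.natDegree_sum_le_of_forall_le
    intro k hk
    simp only [Finset.mem_range] at hk
    have h1 : (X ^ (n + k) + X ^ (n - k) : ℂ[X]).natDegree ≤ 2 * n := by
      apply le_trans (Polynomial.natDegree_add_le _ _)
      simp [Polynomial.natDegree_X_pow]; omega
    have h2 : (X ^ (n + k) - X ^ (n - k) : ℂ[X]).natDegree ≤ 2 * n := by
      apply le_trans (Polynomial.natDegree_sub_le _ _)
      simp [Polynomial.natDegree_X_pow]; omega
    apply le_trans (Polynomial.natDegree_add_le _ _)
    simp only [max_le_iff]
    constructor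
    · exact le_trans (Polynomial.natDegree_C_mul_le _ _) h1
    · exact le_trans (Polynomial.natDegree_C_mul_le _ _) h2
  -- the image finset
  set φ : ℝ → ℂ := fun s => Complex.exp ((s : ℂ) * Complex.I) with hφ
  have hinj : Set.InjOn φ S := by
    intro s hs u hu h
    rw [hφ] at h
    simp only at h
    rw [Complex.exp_eq_exp_iff_exists_int] at h
    obtain ⟨m, hm⟩ := h
    have : (s : ℂ) - u = m * (2 * π) := by
      have := hm
      have h2 : (s : ℂ) * Complex.I - u * Complex.I = m * (2 * π * Complex.I) := by
        rw [this]; ring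
      have h3 : ((s : ℂ) - u) * Complex.I = ((m * (2 * π) : ℝ) : ℂ) * Complex.I := by
        push_cast; rw [sub_mul]; rw [h2]; ring
      have := mul_right_cancel₀ Complex.I_ne_zero h3
      rw [this]; push_cast; ring
    have hre : s - u = m * (2 * π) := by exact_mod_cast this
    have habs := hwin s hs u hu
    rw [hre] at habs
    have : |(m : ℝ)| * (2 * π) < 2 * π := by
      rw [abs_mul, abs_of_pos (by positivity : (0:ℝ) < 2 * π)] at habs; exact habs
    have hm0 : m = 0 := by
      by_contra hm0
      have : (1 : ℝ) ≤ |(m : ℝ)| := by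
        rw [← Int.cast_abs]; exact_mod_cast Int.one_le_abs (by omega)
      nlinarith [Real.pi_pos]
    rw [hm0] at hre; simp at hre; linarith
  have hPz : P = 0 := by
    apply Polynomial.eq_zero_of_natDegree_lt_card_of_eval_eq_zero' P (S.image φ)
    · intro z hz
      simp only [Finset.mem_image] at hz
      obtain ⟨s, hs, rfl⟩ := hz
      rw [keval s, hS0 s hs]
      simp
    · rw [Finset.card_image_of_injOn hinj]
      omega
  intro t
  have := keval t
  rw [hPz] at this
  simp only [Polynomial.eval_zero] at this
  have hne := Complex.exp_ne_zero ((n : ℂ) * t * Complex.I)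
  have : (f t : ℂ) = 0 := by
    rcases mul_eq_zero.mp this.symm with h | h
    · exact absurd h hne
    · exact h
  exact_mod_cast this

lemma trig_continuous {n : ℕ} {f : ℝ → ℝ} (hf : Trig n f) : Continuous f := by
  obtain ⟨A, B, hA⟩ := hf
  have : f = fun t => ∑ k ∈ range (n+1), (A k * Real.cos (k * t) + B k * Real.sin (k * t)) :=
    funext hA
  rw [this]
  exact continuous_finset_sum _ fun k _ => by fun_prop

lemma bernstein_szego_pos {n : ℕ} {g : ℝ → ℝ} {M g' : ℝ}
    (hg : Trig n g) (hbd : ∀ t, |g t| ≤ M) (hder : HasDerivAt g g' 0)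
    (hn : 1 ≤ n) (hM : 0 < M)
    (hcon : (n : ℝ) * Real.sqrt (M ^ 2 - g 0 ^ 2) < g') : False := by
  have hg0 := hbd 0
  have hsq : 0 ≤ M ^ 2 - g 0 ^ 2 := by
    nlinarith [le_abs_self (g 0), neg_abs_le (g 0)]
  have hn0 : (n : ℝ) ≠ 0 := by positivity
  have hnpos : (0:ℝ) < n := by positivity
  have hg' : 0 < g' := lt_of_le_of_lt (by positivity) hcon
  -- choose c
  set F : ℝ → ℝ := fun c => c * g' - n * M * Real.cos (Real.arcsin (c * g 0 / M)) with hF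
  have hkey : M * Real.sqrt (1 - (g 0 / M) ^ 2) = Real.sqrt (M ^ 2 - g 0 ^ 2) := by
    rw [show (1 - (g 0 / M) ^ 2) = (M ^ 2 - g 0 ^ 2) / M ^ 2 by field_simp,
      Real.sqrt_div hsq, Real.sqrt_sq hM.le]
    field_simp
  have hF1 : 0 < F 1 := by
    rw [hF]
    simp only [one_mul]
    rw [Real.cos_arcsin]
    nlinarith [hkey]
  have hFcont : ContinuousAt F 1 := by
    have : Continuous F := by
      rw [hF]
      exact (continuous_id.mul continuous_const).sub (continuous_const.mul
        (Real.continuous_cos.comp (Real.continuous_arcsin.comp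
          ((continuous_id.mul continuous_const).div_const M))))
    exact this.continuousAt
  have hev : ∀ᶠ c in nhdsWithin (1:ℝ) (Set.Iio 1), 0 < F c ∧ c ∈ Set.Ioo (0:ℝ) 1 := by
    apply Filter.Eventually.and
    · exact (hFcont.eventually (eventually_gt_nhds hF1)).filter_mono nhdsWithin_le_nhds
    · exact Filter.eventually_of_mem (Ioo_mem_nhdsLT_of_mem ⟨zero_lt_one, le_refl 1⟩)
        fun x hx => hx
  obtain ⟨c, hFc, hc0, hc1⟩ : ∃ c, 0 < F c ∧ 0 < c ∧ c < 1 := by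
    obtain ⟨c, h1, h2⟩ := hev.exists
    exact ⟨c, h1, h2.1, h2.2⟩
  -- the comparison sinusoid
  have harg : |c * g 0 / M| < 1 := by
    rw [abs_div, abs_mul, abs_of_pos hc0, abs_of_pos hM, div_lt_one hM]
    nlinarith [abs_nonneg (g 0)]
  set α := Real.arcsin (c * g 0 / M) with hα
  have hα2 : α < π / 2 := Real.arcsin_lt_pi_div_two.2 (abs_lt.1 harg).2
  have hα1 : -(π / 2) < α := Real.neg_pi_div_two_lt_arcsin.2 (abs_lt.1 harg).1
  have hsinα : Real.sin α = c * g 0 / M :=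
    Real.sin_arcsin (abs_lt.1 harg).1.le (abs_lt.1 harg).2.le
  have hcosα : 0 < Real.cos α := Real.cos_pos_of_mem_Ioo ⟨hα1, hα2⟩
  set ψ : ℝ → ℝ := fun t => c * g t - M * Real.sin (n * t + α) with hψ
  have hψ0 : ψ 0 = 0 := by
    rw [hψ]; simp only [mul_zero, zero_add]
    rw [hsinα]; field_simp; ring
  set d : ℝ := c * g' - M * (Real.cos α * n) with hd
  have hdpos : 0 < d := by
    rw [hd]; rw [hF] at hFc; rw [hα] at *; nlinarith [hFc]
  have hψder : HasDerivAt ψ d 0 := by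
    have h1 : HasDerivAt (fun t : ℝ => (n : ℝ) * t + α) ((n:ℝ)) 0 := by
      simpa using ((hasDerivAt_id (0:ℝ)).const_mul (n:ℝ)).add_const α
    have h2 : HasDerivAt (fun t : ℝ => Real.sin ((n:ℝ) * t + α))
        (Real.cos ((n:ℝ) * 0 + α) * n) 0 := (Real.hasDerivAt_sin _).comp 0 h1
    have h3 : HasDerivAt (fun t : ℝ => M * Real.sin ((n:ℝ) * t + α))
        (M * (Real.cos α * n)) 0 := by
      have := h2.const_mul M
      simpa using this
    exact (hder.const_mul c).sub h3
  have hψc : Continuous ψ := by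
    rw [hψ]
    exact (continuous_const.mul (trig_continuous hg)).sub
      (continuous_const.mul (Real.continuous_sin.comp (by fun_prop)))
  -- nodes
  set τ : ℕ → ℝ := fun j => ((j : ℝ) * π - π/2 - α) / n with hτ
  have hτval : ∀ j : ℕ, ψ (τ j) = c * g (τ j) + M * (-1) ^ j := by
    intro j
    have harg' : (n : ℝ) * τ j + α = (j : ℝ) * π - π/2 := by
      rw [hτ]; field_simp; ring
    rw [hψ]
    simp only
    rw [harg']
    have : Real.sin ((j:ℝ) * π - π/2) = -((-1)^j * Real.sin (π/2)) :=
      Real.sin_nat_mul_pi_sub _ _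
    rw [this, Real.sin_pi_div_two]
    ring
  have hτpos : ∀ j : ℕ, Even j → 0 < ψ (τ j) := by
    intro j hj
    rw [hτval j, hj.neg_one_pow]
    nlinarith [hbd (τ j), neg_abs_le (g (τ j))]
  have hτneg : ∀ j : ℕ, Odd j → ψ (τ j) < 0 := by
    intro j hj
    rw [hτval j, hj.neg_one_pow]
    nlinarith [hbd (τ j), le_abs_self (g (τ j))]
  have hτmono : StrictMono τ := by
    intro i j hij
    have hij' : (i:ℝ) < (j:ℝ) := by exact_mod_cast hij
    have hnum : (i:ℝ) * π - π/2 - α < (j:ℝ) * π - π/2 - α :=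
      sub_lt_sub_right (sub_lt_sub_right (mul_lt_mul_of_pos_right hij' Real.pi_pos) _) _
    exact (div_lt_div_iff_of_pos_right hnpos).2 hnum
  have hτ0 : τ 0 < 0 := by
    rw [hτ]; simp only [Nat.cast_zero, zero_mul, zero_sub]
    apply div_neg_of_neg_of_pos _ hnpos
    linarith
  have hτ1 : 0 < τ 1 := by
    rw [hτ]; simp only [Nat.cast_one, one_mul]
    apply div_pos _ hnpos
    linarith
  -- points near 0 where ψ is negative (left) / positive (right)
  have hslope := hasDerivAt_iff_tendsto_slope.1 hψder
  have hev2 : ∀ᶠ t in nhdsWithin (0:ℝ) {(0:ℝ)}ᶜ, 0 < slope ψ 0 t :=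
    hslope.eventually (eventually_gt_nhds hdpos)
  have hleft : ∃ t₁, τ 0 < t₁ ∧ t₁ < 0 ∧ ψ t₁ < 0 := by
    have hmem : Set.Ioo (τ 0) 0 ∈ nhdsWithin (0:ℝ) (Set.Iio 0) :=
      Ioo_mem_nhdsLT_of_mem ⟨hτ0, le_refl 0⟩
    have hmono : nhdsWithin (0:ℝ) (Set.Iio 0) ≤ nhdsWithin (0:ℝ) {(0:ℝ)}ᶜ :=
      nhdsWithin_mono 0 (fun x hx => ne_of_lt hx)
    obtain ⟨t₁, h1, h2⟩ := ((hev2.filter_mono hmono).and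
      (Filter.eventually_of_mem hmem (fun x hx => hx))).exists
    refine ⟨t₁, h2.1, h2.2, ?_⟩
    rw [slope_def_field] at h1
    rw [hψ0] at h1
    simp only [sub_zero] at h1
    rcases div_pos_iff.1 h1 with ⟨h3, h4⟩ | ⟨h3, h4⟩
    · linarith [h2.2]
    · exact h3
  have hright : ∃ t₂, 0 < t₂ ∧ t₂ < τ 1 ∧ 0 < ψ t₂ := by
    have hmem : Set.Ioo 0 (τ 1) ∈ nhdsWithin (0:ℝ) (Set.Ioi 0) :=
      Ioo_mem_nhdsGT_of_mem ⟨le_refl 0, hτ1⟩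
    have hmono : nhdsWithin (0:ℝ) (Set.Ioi 0) ≤ nhdsWithin (0:ℝ) {(0:ℝ)}ᶜ :=
      nhdsWithin_mono 0 (fun x hx => ne_of_gt hx)
    obtain ⟨t₂, h1, h2⟩ := ((hev2.filter_mono hmono).and
      (Filter.eventually_of_mem hmem (fun x hx => hx))).exists
    refine ⟨t₂, h2.1, h2.2, ?_⟩
    rw [slope_def_field] at h1
    rw [hψ0] at h1
    simp only [sub_zero] at h1
    rcases div_pos_iff.1 h1 with ⟨h3, h4⟩ | ⟨h3, h4⟩
    · exact h3
    · linarith [h2.1]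
  obtain ⟨t₁, ht₁l, ht₁r, ht₁neg⟩ := hleft
  obtain ⟨t₂, ht₂l, ht₂r, ht₂pos⟩ := hright
  -- zeros
  have hz₀ : ∃ z, z ∈ Set.Ioo (τ 0) t₁ ∧ ψ z = 0 := by
    have := intermediate_value_Ioo' ht₁l.le hψc.continuousOn
    have h0 : (0:ℝ) ∈ Set.Ioo (ψ t₁) (ψ (τ 0)) := ⟨ht₁neg, hτpos 0 (Even.zero)⟩
    obtain ⟨z, hz, hz0⟩ := this h0
    exact ⟨z, hz, hz0⟩
  have hz₂ : ∃ z, z ∈ Set.Ioo t₂ (τ 1) ∧ ψ z = 0 := by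
    have := intermediate_value_Ioo' ht₂r.le hψc.continuousOn
    have h0 : (0:ℝ) ∈ Set.Ioo (ψ (τ 1)) (ψ t₂) := ⟨hτneg 1 odd_one, ht₂pos⟩
    obtain ⟨z, hz, hz0⟩ := this h0
    exact ⟨z, hz, hz0⟩
  obtain ⟨z₀, hz₀m, hz₀v⟩ := hz₀
  obtain ⟨z₂, hz₂m, hz₂v⟩ := hz₂
  have hmid : ∀ j : ℕ, ∃ z, z ∈ Set.Ioo (τ j) (τ (j+1)) ∧ ψ z = 0 := by
    intro j
    rcases Nat.even_or_odd j with hpar | hpar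
    · have h1 := hτpos j hpar
      have h2 := hτneg (j+1) (Even.add_one hpar)
      have := intermediate_value_Ioo' (hτmono (Nat.lt_succ_self j)).le hψc.continuousOn
      obtain ⟨z, hz, hz0⟩ := this (⟨h2, h1⟩ : (0:ℝ) ∈ Set.Ioo (ψ (τ (j+1))) (ψ (τ j)))
      exact ⟨z, hz, hz0⟩
    · have h1 := hτneg j hpar
      have h2 := hτpos (j+1) (Odd.add_one hpar)
      have := intermediate_value_Ioo (hτmono (Nat.lt_succ_self j)).le hψc.continuousOn
      obtain ⟨z, hz, hz0⟩ := this (⟨h1, h2⟩ : (0:ℝ) ∈ Set.Ioo (ψ (τ j)) (ψ (τ (j+1))))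
      exact ⟨z, hz, hz0⟩
  choose w hwm hwv using hmid
  -- the zero sequence
  set ζ : ℕ → ℝ := fun i =>
    if i = 0 then z₀ else if i = 1 then 0 else if i = 2 then z₂ else w (i - 2) with hζ
  have hζ0 : ζ 0 = z₀ := by rw [hζ]; norm_num
  have hζ1 : ζ 1 = 0 := by rw [hζ]; norm_num
  have hζ2 : ζ 2 = z₂ := by rw [hζ]; norm_num
  have hζge : ∀ i, 3 ≤ i → ζ i = w (i - 2) := by
    intro i hi
    rw [hζ]
    have h0 : i ≠ 0 := by omega
    have h1 : i ≠ 1 := by omega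
    have h2 : i ≠ 2 := by omega
    simp [h0, h1, h2]
  have hζzero : ∀ i, ψ (ζ i) = 0 := by
    intro i
    match i with
    | 0 => rw [hζ0]; exact hz₀v
    | 1 => rw [hζ1]; exact hψ0
    | 2 => rw [hζ2]; exact hz₂v
    | (m+3) => rw [hζge _ (by omega)]; exact hwv _
  have hζmono : StrictMono ζ := by
    apply strictMono_nat_of_lt_succ
    intro i
    match i with
    | 0 => rw [hζ0, hζ1]; exact lt_trans hz₀m.2 ht₁r
    | 1 => rw [hζ1, hζ2]; exact lt_trans ht₂l hz₂m.1
    | 2 =>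
      rw [hζ2, hζge 3 (by omega)]
      exact lt_trans hz₂m.2 (hwm 1).1
    | (m+3) =>
      rw [hζge (m+3) (by omega), hζge (m+4) (by omega)]
      have h1 : w (m+1) < τ (m+2) := (hwm (m+1)).2
      have h2 : τ (m+2) < w (m+2) := (hwm (m+2)).1
      have e1 : m + 3 - 2 = m + 1 := by omega
      have e2 : m + 4 - 2 = m + 2 := by omega
      rw [e1, e2]
      linarith
  have hbounds : ∀ i, i ≤ 2*n+1 → ζ i ∈ Set.Ioo (τ 0) (τ (2*n)) := by
    intro i hi
    have h2n : (1:ℕ) ≤ 2*n := by omega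
    have hτ12n : τ 1 ≤ τ (2*n) := hτmono.monotone h2n
    match i, hi with
    | 0, _ =>
      rw [hζ0]
      exact ⟨hz₀m.1, by linarith [hz₀m.2, ht₁r, hτ1]⟩
    | 1, _ =>
      rw [hζ1]
      exact ⟨hτ0, by linarith [hτ1]⟩
    | 2, _ =>
      rw [hζ2]
      exact ⟨by linarith [hz₂m.1, ht₂l, hτ0], by linarith [hz₂m.2]⟩
    | (m+3), hi =>
      rw [hζge _ (by omega)]
      have e1 : m + 3 - 2 = m + 1 := by omega
      rw [e1]
      have h1 : τ 0 < τ (m+1) := hτmono (by omega)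
      have h2 : τ (m+2) ≤ τ (2*n) := hτmono.monotone (by omega)
      exact ⟨by linarith [(hwm (m+1)).1], by linarith [(hwm (m+1)).2]⟩
  have hper : τ (2*n) - τ 0 = 2 * π := by
    rw [hτ]
    field_simp
    push_cast; ring
  -- the finset of zeros
  set S : Finset ℝ := (Finset.range (2*n+2)).image ζ with hS
  have hcard : 2 * n + 1 < S.card := by
    rw [hS, Finset.card_image_of_injective _ hζmono.injective, Finset.card_range]
    omega
  have hS0 : ∀ s ∈ S, ψ s = 0 := by
    intro s hs
    rw [hS] at hs
    simp only [Finset.mem_image] at hs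
    obtain ⟨i, _, rfl⟩ := hs
    exact hζzero i
  have hwin : ∀ s ∈ S, ∀ u ∈ S, |s - u| < 2 * π := by
    intro s hs u hu
    rw [hS] at hs hu
    simp only [Finset.mem_image, Finset.mem_range] at hs hu
    obtain ⟨i, hi, rfl⟩ := hs
    obtain ⟨j, hj, rfl⟩ := hu
    have h1 := hbounds i (by omega)
    have h2 := hbounds j (by omega)
    rw [abs_sub_lt_iff]
    constructor
    · linarith [h1.2, h2.1]
    · linarith [h2.2, h1.1]
  -- ψ is a trig polynomial of degree ≤ n
  have hψtrig : Trig n ψ := by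
    apply trig_congr (f := fun t => c * g t +
      ((-(M * Real.sin α)) * Real.cos ((n:ℕ) * t) + (-(M * Real.cos α)) * Real.sin ((n:ℕ) * t)))
    · intro t
      rw [hψ]
      simp only
      rw [Real.sin_add]
      ring
    · exact trig_add (trig_smul c hg)
        (trig_add (trig_smul _ (trig_cos_atom le_rfl)) (trig_smul _ (trig_sin_atom le_rfl)))
  have hvan := trig_vanish hψtrig S hS0 hwin hcard
  exact absurd (hvan (τ 1)) (ne_of_lt (hτneg 1 odd_one))

lemma bernstein_szego_s15 {n : ℕ} {g : ℝ → ℝ} {M g' : ℝ}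
    (hg : Trig n g) (hbd : ∀ t, |g t| ≤ M) (hder : HasDerivAt g g' 0) :
    |g'| ≤ (n : ℝ) * Real.sqrt (M ^ 2 - g 0 ^ 2) := by
  by_contra hlt
  push_neg at hlt
  have hM0 : 0 ≤ M := le_trans (abs_nonneg _) (hbd 0)
  -- case M = 0
  rcases eq_or_lt_of_le hM0 with hM | hM
  · have hgz : g = fun _ => (0:ℝ) := by
      funext t
      have := hbd t
      rw [← hM] at this
      exact abs_eq_zero.1 (le_antisymm this (abs_nonneg _))
    have hg'0 : g' = 0 := by
      have h2 : HasDerivAt g 0 0 := by rw [hgz]; exact hasDerivAt_const _ _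
      exact hder.unique h2
    rw [hg'0, abs_zero] at hlt
    have : (0:ℝ) ≤ (n : ℝ) * Real.sqrt (M ^ 2 - g 0 ^ 2) := by positivity
    linarith
  -- case n = 0 : g is constant
  rcases Nat.eq_zero_or_pos n with hn | hn
  · obtain ⟨A, B, hA⟩ := hg
    have hgz : g = fun _ => A 0 := by
      funext t
      rw [hA t, hn]
      norm_num
    have hg'0 : g' = 0 := by
      have h2 : HasDerivAt g 0 0 := by rw [hgz]; exact hasDerivAt_const _ _
      exact hder.unique h2
    rw [hg'0, abs_zero] at hlt
    have : (0:ℝ) ≤ (n : ℝ) * Real.sqrt (M ^ 2 - g 0 ^ 2) := by positivity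
    linarith
  rcases le_or_gt 0 g' with hs | hs
  · rw [_root_.abs_of_nonneg hs] at hlt
    exact absurd (bernstein_szego_pos hg hbd hder hn hM hlt) id
  · rw [_root_.abs_of_neg hs] at hlt
    set gm : ℝ → ℝ := fun t => g (-t) with hgm
    have hgmtrig : Trig n gm := by
      obtain ⟨A, B, hA⟩ := hg
      refine ⟨A, fun k => -(B k), fun t => ?_⟩
      rw [hgm]
      simp only
      rw [hA (-t)]
      apply Finset.sum_congr rfl
      intro k _
      rw [show (k:ℝ) * (-t) = -((k:ℝ) * t) by ring, Real.cos_neg, Real.sin_neg]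
      ring
    have hgmbd : ∀ t, |gm t| ≤ M := fun t => hbd (-t)
    have hgmder : HasDerivAt gm (-g') 0 := by
      have h1 : HasDerivAt (fun t : ℝ => -t) (-1) 0 := hasDerivAt_neg 0
      have h2 : HasDerivAt g g' (-(0:ℝ)) := by rw [neg_zero]; exact hder
      have := h2.comp 0 h1
      simpa [hgm, Function.comp_def] using this
    have hgm0 : gm 0 = g 0 := by rw [hgm]; simp
    apply bernstein_szego_pos hgmtrig hgmbd hgmder hn hM
    rw [hgm0]
    exact hlt

/-- A continuous polynomial of degree at most `n` on a real normed space: a finite sum of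
diagonals of continuous `k`-linear forms, `k = 0,…,n`. -/
def IsPolyDegLE {X : Type*} [NormedAddCommGroup X] [NormedSpace ℝ X] (n : ℕ)
    (p : X → ℝ) : Prop :=
  ∃ L : (k : Fin (n + 1)) → ContinuousMultilinearMap ℝ (fun _ : Fin (k : ℕ) => X) ℝ,
    ∀ x : X, p x = ∑ k, L k (fun _ => x)

/-- coefficient functions -/
noncomputable def coefFn (b : ℝ) : Fin 3 → ℝ → ℝ :=
  ![fun t => Real.cos t, fun t => b * Real.sin t, fun _ => 1]

lemma trig_coef_prod (b : ℝ) : ∀ (k : ℕ) (φ : Fin k → Fin 3),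
    Trig k (fun t => ∏ i : Fin k, coefFn b (φ i) t) := by
  intro k
  induction k with
  | zero =>
    intro φ
    apply trig_congr (f := fun _ => (1:ℝ)) _ (trig_const 0 1)
    intro t; simp
  | succ m ih =>
    intro φ
    have htail := ih (φ ∘ Fin.succ)
    have hsplit : ∀ t, (∏ i : Fin (m+1), coefFn b (φ i) t)
        = coefFn b (φ 0) t * ∏ i : Fin m, coefFn b ((φ ∘ Fin.succ) i) t := by
      intro t
      rw [Fin.prod_univ_succ]
      rfl
    obtain ⟨v, hv⟩ : ∃ v, φ 0 = v := ⟨φ 0, rfl⟩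
    fin_cases v
    · apply trig_congr (f := fun t => Real.cos t * ∏ i : Fin m, coefFn b ((φ ∘ Fin.succ) i) t)
      · intro t; rw [hsplit t, hv]; simp [coefFn]
      · exact trig_mul_cos htail
    · apply trig_congr
        (f := fun t => b * (Real.sin t * ∏ i : Fin m, coefFn b ((φ ∘ Fin.succ) i) t))
      · intro t; rw [hsplit t, hv]; simp [coefFn]; ring
      · exact trig_smul b (trig_mul_sin htail)
    · apply trig_congr (f := fun t => ∏ i : Fin m, coefFn b ((φ ∘ Fin.succ) i) t)
      · intro t; rw [hsplit t, hv]; simp [coefFn]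
      · exact trig_mono (by omega) htail

/-- Inscribed Ellipse Lemma (Sarantopoulos): if the ellipse
`t ↦ (cos t)·a + b(sin t)·y + x - a` lies in `K ∋ x`, then every polynomial `p` of degree
at most `n` satisfies `|⟨Dp(x),y⟩| ≤ (n/b)·√(‖p‖_K² - p(x)²)`. -/
theorem inscribed_ellipse_lemma {X : Type*} [NormedAddCommGroup X] [NormedSpace ℝ X]
    (K : Set X) (x a y : X) (b : ℝ) (hb : 0 < b) (hx : x ∈ K)
    (hellipse : ∀ t : ℝ, (Real.cos t) • a + (b * Real.sin t) • y + x - a ∈ K)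
    (n : ℕ) (p : X → ℝ) (hp : IsPolyDegLE n p)
    (hbdd : BddAbove ((fun z => |p z|) '' K)) :
    |deriv (fun t : ℝ => p (x + t • y)) 0| ≤
      ((n : ℝ) / b) * Real.sqrt ((sSup ((fun z => |p z|) '' K)) ^ 2 - (p x) ^ 2) := by
  classical
  obtain ⟨L, hL⟩ := hp
  set M : ℝ := sSup ((fun z => |p z|) '' K) with hM
  set r : ℝ → X := fun t => (Real.cos t) • a + (b * Real.sin t) • y + x - a with hr
  set g : ℝ → ℝ := fun t => p (r t) with hg
  set w : Fin 3 → X := ![a, y, x - a] with hw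
  have hrsum : ∀ t, r t = ∑ j : Fin 3, coefFn b j t • w j := by
    intro t
    rw [hr, hw]
    simp [Fin.sum_univ_three, coefFn]
    abel
  -- trig representation
  have hgtrig : Trig n g := by
    have hrep : ∀ t, g t = ∑ k : Fin (n+1),
        ∑ ρ ∈ Fintype.piFinset (fun _ : Fin (k:ℕ) => (Finset.univ : Finset (Fin 3))),
          (∏ i, coefFn b (ρ i) t) * (L k) (fun i => w (ρ i)) := by
      intro t
      rw [hg]
      simp only
      rw [hL (r t)]
      apply Finset.sum_congr rfl
      intro k _
      have h1 : (fun _ : Fin (k:ℕ) => r t) = fun _ : Fin (k:ℕ) =>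
          ∑ j ∈ (Finset.univ : Finset (Fin 3)), coefFn b j t • w j := by
        funext i; rw [hrsum t]
      rw [h1, ContinuousMultilinearMap.map_sum_finset]
      apply Finset.sum_congr rfl
      intro ρ _
      rw [show ((L k) fun i => coefFn b (ρ i) t • w (ρ i))
          = (∏ i, coefFn b (ρ i) t) • ((L k) fun i => w (ρ i)) from
        (L k).toMultilinearMap.map_smul_univ _ _]
      rw [smul_eq_mul]
    apply trig_congr (fun t => (hrep t).symm)
    apply trig_sum
    intro k _
    apply trig_mono (by omega : (k:ℕ) ≤ n)
    apply trig_sum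
    intro ρ _
    apply trig_congr (f := fun t => ((L k) fun i => w (ρ i)) * ∏ i, coefFn b (ρ i) t)
    · intro t; ring
    · exact trig_smul _ (trig_coef_prod b _ ρ)
  -- derivatives
  set D : ℝ := ∑ k : Fin (n+1), (L k).linearDeriv (fun _ => x) (fun _ => y) with hD
  have hD1 : HasDerivAt (fun t : ℝ => p (x + t • y)) D 0 := by
    have h0 : (fun t : ℝ => p (x + t • y)) = fun t => ∑ k : Fin (n+1), L k (fun _ => x + t • y) :=
      funext fun t => hL _
    rw [h0, hD]
    apply HasDerivAt.fun_sum
    intro k _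
    have hc : HasDerivAt (fun t : ℝ => (fun _ : Fin (k:ℕ) => x + t • y)) (fun _ => y) 0 := by
      apply hasDerivAt_pi.2
      intro i
      simpa using ((hasDerivAt_id (0:ℝ)).smul_const y).const_add x
    have hfd := ((L k).hasFDerivAt (fun _ : Fin (k:ℕ) => x + (0:ℝ) • y)).comp_hasDerivAt 0 hc
    have he : (fun _ : Fin (k:ℕ) => x + (0:ℝ) • y) = fun _ => x := by funext i; simp
    rw [he] at hfd
    simpa [Function.comp_def] using hfd
  have hrd : HasDerivAt r (b • y) 0 := by
    have h1 : HasDerivAt (fun t => Real.cos t • a) ((-Real.sin 0) • a) 0 :=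
      (Real.hasDerivAt_cos 0).smul_const a
    have h2 : HasDerivAt (fun t => (b * Real.sin t) • y) ((b * Real.cos 0) • y) 0 :=
      ((Real.hasDerivAt_sin 0).const_mul b).smul_const y
    have h3 := ((h1.add h2).add_const x).sub_const a
    have : r = fun t => Real.cos t • a + (b * Real.sin t) • y + x - a := hr
    rw [this]
    simpa using h3
  have hr0 : r 0 = x := by rw [hr]; simp
  have hD2 : HasDerivAt g (b * D) 0 := by
    have h0 : g = fun t => ∑ k : Fin (n+1), L k (fun _ => r t) := by
      funext t; rw [hg]; exact hL _
    rw [h0, hD, Finset.mul_sum]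
    apply HasDerivAt.fun_sum
    intro k _
    have hc : HasDerivAt (fun t : ℝ => (fun _ : Fin (k:ℕ) => r t)) (fun _ => b • y) 0 :=
      hasDerivAt_pi.2 (fun i => hrd)
    have hfd := ((L k).hasFDerivAt (fun _ : Fin (k:ℕ) => r 0)).comp_hasDerivAt 0 hc
    rw [hr0] at hfd
    have he : (fun _ : Fin (k:ℕ) => b • y) = b • (fun _ : Fin (k:ℕ) => y) := rfl
    have hlin : ((L k).linearDeriv (fun _ => x)) (fun _ : Fin (k:ℕ) => b • y)
        = b * ((L k).linearDeriv (fun _ => x)) (fun _ : Fin (k:ℕ) => y) := by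
      rw [he, map_smul, smul_eq_mul]
    simpa [Function.comp_def, hlin] using hfd
  -- bound
  have hbdg : ∀ t, |g t| ≤ M := by
    intro t
    apply le_csSup hbdd
    exact ⟨r t, hellipse t, rfl⟩
  have hg0 : g 0 = p x := by rw [hg]; simp [hr0]
  have hbs := bernstein_szego_s15 hgtrig hbdg hD2
  rw [hg0] at hbs
  rw [abs_mul, abs_of_pos hb] at hbs
  have hderiv : deriv (fun t : ℝ => p (x + t • y)) 0 = D := hD1.deriv
  rw [hderiv]
  rw [div_mul_eq_mul_div, le_div_iff₀ hb]
  calc |D| * b = b * |D| := by ring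
    _ ≤ (n : ℝ) * Real.sqrt (M ^ 2 - p x ^ 2) := hbs
end

section
/- For the unit interval I = [−1,1] ⊂ ℝ, any real polynomial p of degree ≤ n with ‖p‖_I ≤ 1, and any x ∈ (−1,1), the Bernstein–Szegő inequality holds: |p'(x)| ≤ n·√(1 − p(x)²)/√(1 − x²). -/
open Polynomial Real Set

noncomputable def trPoly (q : Polynomial ℝ) (m : ℕ) : Polynomial ℂ :=
  ∑ j ∈ q.support, Polynomial.C ((q.coeff j : ℂ) / 2 ^ j) * (X ^ 2 + 1) ^ j * X ^ (m - j)

lemma trPoly_natDegree_le (q : Polynomial ℝ) (m : ℕ) (hq : q.natDegree ≤ m) :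
    (trPoly q m).natDegree ≤ 2 * m := by
  refine (Polynomial.natDegree_sum_le _ _).trans ?_
  rw [Finset.fold_max_le]
  constructor
  · omega
  intro j hj
  have hjm : j ≤ m := (Polynomial.le_natDegree_of_ne_zero (Polynomial.mem_support_iff.mp hj)).trans hq
  refine (Polynomial.natDegree_mul_le).trans ?_
  have h1 : (Polynomial.C ((q.coeff j : ℂ) / 2 ^ j) * (X ^ 2 + 1) ^ j).natDegree ≤ 2 * j := by
    refine (Polynomial.natDegree_mul_le).trans ?_
    have : ((X ^ 2 + 1 : Polynomial ℂ)).natDegree ≤ 2 := by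
      refine (Polynomial.natDegree_add_le _ _).trans ?_
      simp [Polynomial.natDegree_X_pow]
    have := Polynomial.natDegree_pow_le_of_le j this
    simp only [Polynomial.natDegree_C, zero_add]
    omega
  have h2 : ((X : Polynomial ℂ) ^ (m - j)).natDegree ≤ m - j := by
    simp [Polynomial.natDegree_X_pow]
  omega

lemma exp_sq_add_one (θ : ℝ) :
    Complex.exp (θ * Complex.I) ^ 2 + 1 = 2 * Complex.exp (θ * Complex.I) * (Real.cos θ : ℂ) := by
  have h : Complex.exp (↑θ * Complex.I) * Complex.exp (-↑θ * Complex.I) = 1 := by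
    rw [← Complex.exp_add]; ring_nf; exact Complex.exp_zero
  rw [Complex.ofReal_cos, Complex.cos]
  rw [show (2:ℂ) * Complex.exp (↑θ*Complex.I) *
      ((Complex.exp (↑θ*Complex.I) + Complex.exp (-↑θ*Complex.I))/2)
      = Complex.exp (↑θ*Complex.I)^2 + Complex.exp (↑θ*Complex.I) * Complex.exp (-↑θ*Complex.I)
      by ring, h]

lemma trPoly_eval' (q : Polynomial ℝ) (m : ℕ) (hq : q.natDegree ≤ m) (θ : ℝ) :
    (trPoly q m).eval (Complex.exp (θ * Complex.I))
      = Complex.exp (θ * Complex.I) ^ m * ((q.eval (Real.cos θ) : ℝ) : ℂ) := by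
  set z := Complex.exp (θ * Complex.I) with hz
  have hz0 : z ≠ 0 := Complex.exp_ne_zero _
  rw [trPoly, Polynomial.eval_finset_sum]
  have : ∀ j ∈ q.support,
      (Polynomial.C ((q.coeff j : ℂ) / 2 ^ j) * (X ^ 2 + 1) ^ j * X ^ (m - j)).eval z
        = z ^ m * ((q.coeff j : ℂ) * (Real.cos θ : ℂ) ^ j) := by
    intro j hj
    have hjm : j ≤ m := (Polynomial.le_natDegree_of_ne_zero (Polynomial.mem_support_iff.mp hj)).trans hq
    simp only [Polynomial.eval_mul, Polynomial.eval_C, Polynomial.eval_pow, Polynomial.eval_add,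
      Polynomial.eval_X, Polynomial.eval_one]
    rw [exp_sq_add_one θ]
    rw [mul_pow, mul_pow]
    have h2 : (2 : ℂ) ^ j ≠ 0 := by norm_num
    field_simp
    rw [← hz]
    have hzz : z ^ j * z ^ (m - j) = z ^ m := by rw [← pow_add]; congr 1; omega
    linear_combination (↑(q.coeff j) * ((Real.cos θ : ℝ) : ℂ) ^ j) * hzz
  rw [Finset.sum_congr rfl this, ← Finset.mul_sum]
  congr 1
  rw [Polynomial.eval_eq_sum, Polynomial.sum]
  push_cast
  rfl

lemma poly_zero_of_many_roots (m : ℕ) (F : Polynomial ℂ) (hdeg : F.natDegree ≤ m)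
    (a : ℝ) (t : Fin (m + 1) → ℝ) (ht : Function.Injective t)
    (hmem : ∀ i, t i ∈ Set.Ico a (a + 2 * π))
    (hroot : ∀ i, F.eval (Complex.exp (t i * Complex.I)) = 0) : F = 0 := by
  by_contra hF
  have hinj : Function.Injective fun i => Complex.exp (t i * Complex.I) := by
    intro i j hij
    simp only at hij
    rw [Complex.exp_eq_exp_iff_exists_int] at hij
    obtain ⟨k, hk⟩ := hij
    have hk' : (t i : ℂ) = (t j : ℝ) + k * (2 * π) := by
      have : (t i : ℂ) * Complex.I = ((t j : ℝ) + k * (2 * π)) * Complex.I := by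
        rw [hk]; push_cast; ring
      exact mul_right_cancel₀ Complex.I_ne_zero this
    have hk2 : t i = t j + k * (2 * π) := by exact_mod_cast hk'
    have h1 := hmem i; have h2 := hmem j
    have hpi := Real.pi_pos
    have : k = 0 := by
      rcases lt_trichotomy k 0 with h | h | h
      · have : (k : ℝ) ≤ -1 := by exact_mod_cast (by omega : k ≤ -1)
        nlinarith [h1.1, h1.2, h2.1, h2.2]
      · exact h
      · have : (1 : ℝ) ≤ k := by exact_mod_cast h
        nlinarith [h1.1, h1.2, h2.1, h2.2]
    apply ht
    rw [hk2, this]; push_cast; ring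
  have hcard : (Finset.univ.image fun i => Complex.exp (t i * Complex.I)).card = m + 1 := by
    rw [Finset.card_image_of_injective _ hinj, Finset.card_univ, Fintype.card_fin]
  have hsub : (Finset.univ.image fun i => Complex.exp (t i * Complex.I)) ⊆ F.roots.toFinset := by
    intro z hz
    simp only [Finset.mem_image] at hz
    obtain ⟨i, _, rfl⟩ := hz
    rw [Multiset.mem_toFinset, Polynomial.mem_roots hF]
    exact hroot i
  have := Finset.card_le_card hsub
  have h2 := Multiset.toFinset_card_le F.roots
  have h3 := F.card_roots' 
  omega

noncomputable def Hpoly (n : ℕ) (p : Polynomial ℝ) (c φ : ℝ) : Polynomial ℂ :=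
  Polynomial.C ((c:ℂ) * Complex.exp (φ * Complex.I)) * X ^ (2*n)
    + Polynomial.C ((c:ℂ) * Complex.exp (-φ * Complex.I)) - Polynomial.C 2 * trPoly p n

noncomputable def Gpoly (n : ℕ) (p : Polynomial ℝ) (c φ : ℝ) : Polynomial ℂ :=
  Polynomial.C (-((c:ℂ)*n) * Complex.exp (φ * Complex.I)) * X ^ (2*n)
    + Polynomial.C ((c:ℂ)*n * Complex.exp (-φ * Complex.I))
    + (X ^ 2 - 1) * trPoly (Polynomial.derivative p) (n-1)

lemma exp_unit (a : ℝ) : Complex.exp (a * Complex.I) * Complex.exp (-a * Complex.I) = 1 := by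
  rw [← Complex.exp_add]; ring_nf; exact Complex.exp_zero

lemma Hpoly_eval (n : ℕ) (p : Polynomial ℝ) (c φ : ℝ) (hdeg : p.natDegree ≤ n) (θ : ℝ) :
    (Hpoly n p c φ).eval (Complex.exp (θ * Complex.I))
      = 2 * Complex.exp (θ * Complex.I) ^ n
          * ((c * Real.cos (n * θ + φ) - p.eval (Real.cos θ) : ℝ) : ℂ) := by
  have hzn : Complex.exp (θ * Complex.I) ^ n = Complex.exp ((n * θ : ℝ) * Complex.I) := by
    rw [← Complex.exp_nat_mul]; push_cast; ring_nf
  have hz2n : Complex.exp (θ * Complex.I) ^ (2*n) = Complex.exp ((n * θ : ℝ) * Complex.I) ^ 2 := by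
    rw [pow_mul']; rw [hzn]
  simp only [Hpoly, Polynomial.eval_sub, Polynomial.eval_add, Polynomial.eval_mul,
    Polynomial.eval_C, Polynomial.eval_pow, Polynomial.eval_X]
  rw [trPoly_eval' p n hdeg θ, hzn, hz2n]
  push_cast [Complex.ofReal_cos]
  rw [Complex.cos]
  set E := Complex.exp ((n:ℂ) * θ * Complex.I) with hE
  have hEu : E * Complex.exp (-((n:ℂ) * θ) * Complex.I) = 1 := by
    rw [hE, ← Complex.exp_add]; ring_nf; exact Complex.exp_zero
  set E' := Complex.exp (-((n:ℂ) * θ) * Complex.I) with hE'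
  have h1 : Complex.exp (((n:ℂ) * θ + φ) * Complex.I) = E * Complex.exp ((φ:ℂ) * Complex.I) := by
    rw [hE, ← Complex.exp_add]; congr 1; ring
  have h2 : Complex.exp (-((n:ℂ) * θ + φ) * Complex.I) = E' * Complex.exp (-(φ:ℂ) * Complex.I) := by
    rw [hE', ← Complex.exp_add]; congr 1; ring
  rw [h1, h2]
  linear_combination (-(c:ℂ) * Complex.exp (-(φ:ℂ) * Complex.I)) * hEu

lemma Gpoly_eval (n : ℕ) (p : Polynomial ℝ) (c φ : ℝ) (hn : 1 ≤ n)
    (hdeg : p.natDegree ≤ n) (θ : ℝ) :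
    (Gpoly n p c φ).eval (Complex.exp (θ * Complex.I))
      = 2 * Complex.I * Complex.exp (θ * Complex.I) ^ n
          * ((-(c*n) * Real.sin (n * θ + φ)
              + Real.sin θ * (Polynomial.derivative p).eval (Real.cos θ) : ℝ) : ℂ) := by
  have hdeg' : (Polynomial.derivative p).natDegree ≤ n - 1 :=
    le_trans (Polynomial.natDegree_derivative_le p) (by omega)
  have hP := trPoly_eval' (Polynomial.derivative p) (n-1) hdeg' θ
  simp only [Gpoly, Polynomial.eval_add, Polynomial.eval_sub, Polynomial.eval_mul,
    Polynomial.eval_C, Polynomial.eval_pow, Polynomial.eval_X, Polynomial.eval_one, hP]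
  push_cast [Complex.ofReal_sin]
  rw [Complex.sin, Complex.sin]
  set z := Complex.exp ((θ:ℂ) * Complex.I) with hz
  set z' := Complex.exp (-(θ:ℂ) * Complex.I) with hz'
  set F := Complex.exp ((φ:ℂ) * Complex.I) with hF
  set F' := Complex.exp (-(φ:ℂ) * Complex.I) with hF'
  set E := Complex.exp ((n:ℂ) * θ * Complex.I) with hE
  set E'' := Complex.exp (-((n:ℂ) * θ) * Complex.I) with hE''
  have hzn : z ^ n = E := by rw [hz, hE, ← Complex.exp_nat_mul]; ring_nf
  have hz2n : z ^ (2*n) = E * E := by rw [pow_mul', sq, hzn]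
  have he : z * z' = 1 := by rw [hz, hz', ← Complex.exp_add]; ring_nf; exact Complex.exp_zero
  have hEu : E * E'' = 1 := by rw [hE, hE'', ← Complex.exp_add]; ring_nf; exact Complex.exp_zero
  have hkz : E = z ^ (n-1) * z := by
    rw [← hzn, ← pow_succ]; congr 1; omega
  have h1 : Complex.exp (((n:ℂ) * θ + φ) * Complex.I) = E * F := by
    rw [hE, hF, ← Complex.exp_add]; congr 1; ring
  have h2 : Complex.exp (-((n:ℂ) * θ + φ) * Complex.I) = E'' * F' := by
    rw [hE'', hF', ← Complex.exp_add]; congr 1; ring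
  rw [hz2n, hzn, h1, h2]
  set P := (((Polynomial.derivative p).eval (Real.cos θ) : ℝ) : ℂ) with hPdef
  linear_combination (-(c:ℂ)*n*F') * hEu + (z^(n-1) * P) * he + (P*(z'-z)) * hkz
    + ((c:ℂ)*n*E*(E''*F'-E*F) - E*(z'-z)*P) * Complex.I_mul_I

lemma Hpoly_natDegree_le (n : ℕ) (p : Polynomial ℝ) (c φ : ℝ) (hdeg : p.natDegree ≤ n) :
    (Hpoly n p c φ).natDegree ≤ 2*n := by
  have h1 := trPoly_natDegree_le p n hdeg
  refine le_trans (Polynomial.natDegree_sub_le _ _)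
    (max_le (le_trans (Polynomial.natDegree_add_le _ _) (max_le ?_ ?_)) ?_)
  · exact le_trans (Polynomial.natDegree_C_mul_le _ _) (by simp [Polynomial.natDegree_X_pow])
  · rw [Polynomial.natDegree_C]; omega
  · exact le_trans (Polynomial.natDegree_C_mul_le _ _) h1

lemma Gpoly_natDegree_le (n : ℕ) (p : Polynomial ℝ) (c φ : ℝ) (hn : 1 ≤ n)
    (hdeg : p.natDegree ≤ n) :
    (Gpoly n p c φ).natDegree ≤ 2*n := by
  have hdeg' : (Polynomial.derivative p).natDegree ≤ n - 1 :=
    le_trans (Polynomial.natDegree_derivative_le p) (by omega)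
  have h1 := trPoly_natDegree_le (Polynomial.derivative p) (n-1) hdeg'
  refine le_trans (Polynomial.natDegree_add_le _ _)
    (max_le (le_trans (Polynomial.natDegree_add_le _ _) (max_le ?_ ?_)) ?_)
  · exact le_trans (Polynomial.natDegree_C_mul_le _ _) (by simp [Polynomial.natDegree_X_pow])
  · rw [Polynomial.natDegree_C]; omega
  · refine le_trans (Polynomial.natDegree_mul_le) ?_
    have h2 : ((X:Polynomial ℂ) ^ 2 - 1).natDegree ≤ 2 := by
      refine le_trans (Polynomial.natDegree_sub_le _ _) ?_
      simp [Polynomial.natDegree_X_pow]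
    omega
set_option maxHeartbeats 1600000 in
/-- Bernstein–Szegő inequality on `[-1,1]`: if `deg p ≤ n` and `|p| ≤ 1` on `[-1,1]`,
then `|p'(x)| ≤ n √(1-p(x)²)/√(1-x²)` for `x ∈ (-1,1)`. -/
theorem bernstein_szego (n : ℕ) (p : Polynomial ℝ) (hdeg : p.natDegree ≤ n)
    (hbd : ∀ t ∈ Set.Icc (-1 : ℝ) 1, |p.eval t| ≤ 1)
    (x : ℝ) (hx : x ∈ Set.Ioo (-1 : ℝ) 1) :
    |(Polynomial.derivative p).eval x| ≤
      (n : ℝ) * Real.sqrt (1 - p.eval x ^ 2) / Real.sqrt (1 - x ^ 2) := by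
  rcases Nat.eq_zero_or_pos n with hn0 | hn
  · subst hn0
    obtain ⟨a, rfl⟩ := Polynomial.natDegree_eq_zero.mp (Nat.le_zero.mp hdeg)
    simp
  have hnR : (1:ℝ) ≤ n := by exact_mod_cast hn
  have hnne : (n:ℝ) ≠ 0 := by positivity
  have h1x : (0:ℝ) < 1 - x^2 := by nlinarith [hx.1, hx.2]
  set θ₀ := Real.arccos x with hθ₀def
  have hcosθ₀ : Real.cos θ₀ = x := Real.cos_arccos (by linarith [hx.1]) (by linarith [hx.2])
  have hsinθ₀ : Real.sin θ₀ = Real.sqrt (1 - x^2) := Real.sin_arccos x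
  have hsinpos : 0 < Real.sin θ₀ := by rw [hsinθ₀]; exact Real.sqrt_pos.mpr h1x
  set A := p.eval x with hA
  set B := Real.sin θ₀ * (Polynomial.derivative p).eval x with hB
  clear_value θ₀
  have hA1 : |A| ≤ 1 := hbd x ⟨le_of_lt hx.1, le_of_lt hx.2⟩
  have hA2 : A^2 ≤ 1 := by nlinarith [abs_nonneg A, sq_abs A]
  clear_value A B
  have key : B^2 + (n:ℝ)^2 * A^2 ≤ (n:ℝ)^2 := by
    by_contra hcon
    push_neg at hcon
    set Er := B^2 + (n:ℝ)^2 * A^2 with hEr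
    clear_value Er
    have hErpos : (0:ℝ) < Er := lt_of_le_of_lt (sq_nonneg _) hcon
    set c := Real.sqrt Er / n with hcdef
    have hsq : Real.sqrt Er ^ 2 = Er := Real.sq_sqrt (le_of_lt hErpos)
    have hc1 : 1 < c := by
      rw [hcdef, lt_div_iff₀ (by positivity : (0:ℝ) < n)]
      nlinarith [Real.sqrt_nonneg Er]
    have hcpos : 0 < c := lt_trans one_pos hc1
    have hcn : c * n = Real.sqrt Er := by rw [hcdef, div_mul_cancel₀ _ hnne]
    have hcnsq : (c*n)^2 = Er := by rw [hcn]; exact hsq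
    clear_value c
    set w : ℂ := (A:ℂ) + ((B/n : ℝ):ℂ) * Complex.I with hwdef
    have habs : ‖w‖ = c := by
      rw [hwdef, Complex.norm_def, Complex.normSq_add_mul_I]
      rw [show (A:ℝ)^2 + (B/n)^2 = Er / (n:ℝ)^2 by rw [hEr]; field_simp; ring]
      rw [Real.sqrt_div (le_of_lt hErpos), Real.sqrt_sq (by positivity : (0:ℝ) ≤ n)]
      exact hcdef.symm
    have hw0 : w ≠ 0 := by
      intro hz; rw [hz, norm_zero] at habs; linarith
    set ψ := Complex.arg w with hψdef
    clear_value w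
    have hcosψ : Real.cos ψ = A / c := by
      rw [hψdef, Complex.cos_arg hw0, habs, hwdef]; simp
    have hsinψ : Real.sin ψ = B / (n * c) := by
      rw [hψdef, Complex.sin_arg, habs, hwdef]
      simp
      ring
    set φv := ψ - n * θ₀ with hφdef
    clear_value ψ
    set h := fun θ : ℝ => c * Real.cos (n*θ + φv) - p.eval (Real.cos θ) with hhdef
    set d := fun θ : ℝ => -(c*(n:ℝ)) * Real.sin ((n:ℝ)*θ + φv)
        + Real.sin θ * (Polynomial.derivative p).eval (Real.cos θ) with hddef
    clear_value φv h d
    have hderiv : ∀ θ : ℝ, HasDerivAt h (d θ) θ := by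
      intro θ
      have h1 : HasDerivAt (fun θ:ℝ => (n:ℝ)*θ + φv) ((n:ℝ)*1) θ :=
        ((hasDerivAt_id θ).const_mul ((n:ℝ))).add_const φv
      have h2 : HasDerivAt (fun θ:ℝ => Real.cos ((n:ℝ)*θ + φv))
          (-Real.sin ((n:ℝ)*θ + φv) * ((n:ℝ)*1)) θ :=
        (Real.hasDerivAt_cos _).comp θ h1
      have h3 := h2.const_mul c
      have h4 : HasDerivAt (fun θ:ℝ => p.eval (Real.cos θ))
          ((Polynomial.derivative p).eval (Real.cos θ) * (-Real.sin θ)) θ :=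
        (p.hasDerivAt (Real.cos θ)).comp θ (Real.hasDerivAt_cos θ)
      have h5 := h3.sub h4
      convert h5 using 1
      · rfl
      · rfl
      · rw [hhdef]; rfl
      · rw [hddef]; ring
    have hdiff : Differentiable ℝ h := fun θ => (hderiv θ).differentiableAt
    have hcont : Continuous h := hdiff.continuous
    have hψeq : (n:ℝ)*θ₀ + φv = ψ := by rw [hφdef]; ring
    have hhθ₀ : h θ₀ = 0 := by
      rw [hhdef]; simp only; rw [hψeq, hcosψ, hcosθ₀, ← hA]
      field_simp
      ring
    have hdθ₀ : d θ₀ = 0 := by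
      rw [hddef]; simp only; rw [hψeq, hsinψ, hcosθ₀]
      have : Real.sin θ₀ * (Polynomial.derivative p).eval x = B := by rw [hB]
      rw [this]; field_simp; ring
    set θf := fun k : ℤ => ((k:ℝ) * π - φv) / n with hθfdef
    clear_value θf
    have pi_pos := Real.pi_pos
    have hθflin : ∀ k : ℤ, (n:ℝ) * θf k + φv = (k:ℝ) * π := by
      intro k; rw [hθfdef]; field_simp; ring
    have hθfsm : StrictMono θf := by
      intro k l hkl
      have hklR : (k:ℝ) < l := by exact_mod_cast hkl
      simp only [hθfdef]
      rw [div_lt_div_iff_of_pos_right (by positivity : (0:ℝ) < (n:ℝ))]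
      nlinarith [mul_pos (sub_pos.mpr hklR) pi_pos]
    have hθfper : ∀ k : ℤ, θf (k + 2*n) = θf k + 2*π := by
      intro k; simp only [hθfdef]; push_cast; field_simp; ring
    set sg : ℤ → ℝ := fun k => Real.cos ((k:ℝ)*π) with hsgdef
    clear_value sg
    have hsk : ∀ k : ℤ, sg k = 1 ∨ sg k = -1 := by
      intro k
      have hs := Real.sin_int_mul_pi k
      have hpyth := Real.sin_sq_add_cos_sq ((k:ℝ)*π)
      apply mul_self_eq_one_iff.mp
      simp only [hsgdef]
      rw [← Real.sin_sq_add_cos_sq ((k:ℝ)*π), hs]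
      ring
    have hsucc : ∀ k : ℤ, sg (k+1) = - sg k := by
      intro k
      simp only [hsgdef]
      rw [show ((k+1:ℤ):ℝ)*π = (k:ℝ)*π + π by push_cast; ring]
      exact Real.cos_add_pi _
    have hbnd2 : ∀ θ : ℝ, |p.eval (Real.cos θ)| ≤ 1 := fun θ =>
      hbd _ ⟨Real.neg_one_le_cos θ, Real.cos_le_one θ⟩
    have hhθf : ∀ k : ℤ, h (θf k) = c * sg k - p.eval (Real.cos (θf k)) := by
      intro k; rw [hhdef]; simp only [hsgdef]; rw [hθflin k]
    have hIVT : ∀ k : ℤ, ∃ zz, zz ∈ Set.Ioo (θf k) (θf (k+1)) ∧ h zz = 0 := by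
      intro k
      have hlt : θf k < θf (k+1) := hθfsm (by omega)
      have e1 := hhθf k
      have e2 := hhθf (k+1)
      rw [hsucc k] at e2
      have b1 := hbnd2 (θf k)
      have b2 := hbnd2 (θf (k+1))
      rcases hsk k with hs | hs
      · rw [hs] at e1 e2
        have hpos : 0 < h (θf k) := by rw [e1]; cases' abs_le.mp b1 with l r; linarith
        have hneg : h (θf (k+1)) < 0 := by rw [e2]; cases' abs_le.mp b2 with l r; linarith
        have := intermediate_value_Ioo' (le_of_lt hlt) hcont.continuousOn
        have hmem : (0:ℝ) ∈ Set.Ioo (h (θf (k+1))) (h (θf k)) := ⟨hneg, hpos⟩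
        obtain ⟨zz, hzz1, hzz2⟩ := this hmem
        exact ⟨zz, hzz1, hzz2⟩
      · rw [hs] at e1 e2
        have hneg : h (θf k) < 0 := by rw [e1]; cases' abs_le.mp b1 with l r; linarith
        have hpos : 0 < h (θf (k+1)) := by rw [e2]; cases' abs_le.mp b2 with l r; linarith
        have := intermediate_value_Ioo (le_of_lt hlt) hcont.continuousOn
        have hmem : (0:ℝ) ∈ Set.Ioo (h (θf k)) (h (θf (k+1))) := ⟨hneg, hpos⟩
        obtain ⟨zz, hzz1, hzz2⟩ := this hmem
        exact ⟨zz, hzz1, hzz2⟩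
    choose zf hzf1 hzf2 using hIVT
    have hzsm : ∀ k l : ℤ, k < l → zf k < zf l := by
      intro k l hkl
      calc zf k < θf (k+1) := (hzf1 k).2
        _ ≤ θf l := by
            rcases eq_or_lt_of_le (by omega : k+1 ≤ l) with he | hlt
            · rw [he]
            · exact le_of_lt (hθfsm hlt)
        _ < zf l := (hzf1 l).1
    have hzle : ∀ k l : ℤ, k ≤ l → zf k ≤ zf l := by
      intro k l hkl
      rcases eq_or_lt_of_le hkl with he | hlt
      · rw [he]
      · exact le_of_lt (hzsm k l hlt)
    set K := ⌊((n:ℝ)*θ₀ + φv)/π⌋ with hKdef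
    clear_value K
    have hK1 : θf K ≤ θ₀ := by
      have hfl := Int.floor_le (((n:ℝ)*θ₀ + φv)/π)
      rw [← hKdef, le_div_iff₀ pi_pos] at hfl
      simp only [hθfdef]
      rw [div_le_iff₀ (by positivity : (0:ℝ) < (n:ℝ))]
      linarith
    have hK2 : θ₀ < θf (K+1) := by
      have hfl := Int.lt_floor_add_one (((n:ℝ)*θ₀ + φv)/π)
      rw [← hKdef, div_lt_iff₀ pi_pos] at hfl
      simp only [hθfdef]
      rw [lt_div_iff₀ (by positivity : (0:ℝ) < (n:ℝ))]
      push_cast at hfl ⊢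
      linarith
    have hrolle : ∀ k : ℤ, ∃ ww, ww ∈ Set.Ioo (zf k) (zf (k+1)) ∧ d ww = 0 := by
      intro k
      have hlt : zf k < zf (k+1) := hzsm k (k+1) (by omega)
      obtain ⟨ww, hw1, hw2⟩ := exists_hasDerivAt_eq_zero hlt hcont.continuousOn
        ((hzf2 k).trans (hzf2 (k+1)).symm) (fun y _ => hderiv y)
      exact ⟨ww, hw1, hw2⟩
    choose wf hwf1 hwf2 using hrolle
    have hper : ∀ θ : ℝ, h (θ + 2*π) = h θ := by
      intro θ
      rw [hhdef]; simp only
      rw [Real.cos_add_two_pi]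
      congr 2
      rw [show (n:ℝ)*(θ + 2*π) + φv = ((n:ℝ)*θ + φv) + (n:ℕ)*(2*π) by push_cast; ring]
      exact Real.cos_add_nat_mul_two_pi _ n
    have hwrap : ∃ ww, ww ∈ Set.Ioo (zf (K+2*n-1)) (zf K + 2*π) ∧ d ww = 0 := by
      have hlt : zf (K+2*n-1) < zf K + 2*π := by
        calc zf (K+2*n-1) < θf (K+2*n-1+1) := (hzf1 _).2
          _ = θf (K+2*n) := by norm_num
          _ = θf K + 2*π := hθfper K
          _ ≤ zf K + 2*π := by linarith [(hzf1 K).1]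
      have hzero2 : h (zf K + 2*π) = 0 := by rw [hper (zf K)]; exact hzf2 K
      obtain ⟨ww, hw1, hw2⟩ := exists_hasDerivAt_eq_zero hlt hcont.continuousOn
        ((hzf2 _).trans hzero2.symm) (fun y _ => hderiv y)
      exact ⟨ww, hw1, hw2⟩
    obtain ⟨wl, hwl1, hwl2⟩ := hwrap
    -- common facts for both cases
    have hθfK2π : θf (K + 2*n) = θf K + 2*π := hθfper K
    have hθfle : ∀ j1 j2 : ℤ, j1 ≤ j2 → θf j1 ≤ θf j2 := fun j1 j2 hj =>
      hθfsm.monotone hj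
    have two_pi_pos : (0:ℝ) < 2*π := by linarith
    have hznotzero : h (θf K) ≠ 0 := by
      rw [hhθf K]
      have b := abs_le.mp (hbnd2 (θf K))
      rcases hsk K with hs | hs <;> rw [hs] <;> intro hzero <;> linarith [b.1, b.2]
    by_cases hcase : θ₀ = zf K
    · -- Case B : θ₀ is one of the IVT zeros; use Rolle zeros of d and Gpoly
      have hwfsm : ∀ k l : ℤ, k < l → wf k < wf l := by
        intro k l hkl
        calc wf k < zf (k+1) := (hwf1 k).2
          _ ≤ zf l := hzle _ _ (by omega)
          _ < wf l := (hwf1 l).1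
      -- the tuple
      set t : Fin (2*n+1) → ℝ := fun i =>
        if (i:ℕ) = 0 then θ₀ else if (i:ℕ) = 2*n then wl else wf (K + (i:ℕ) - 1) with htdef
      have ht0 : ∀ i : Fin (2*n+1), (i:ℕ) ≠ 0 → (i:ℕ) ≠ 2*n →
          t i = wf (K + (i:ℕ) - 1) := by
        intro i h1 h2; simp only [htdef]; rw [if_neg h1, if_neg h2]
      have htv0 : ∀ i : Fin (2*n+1), (i:ℕ) = 0 → t i = θ₀ := by
        intro i h1; simp only [htdef]; rw [if_pos h1]
      have htv2 : ∀ i : Fin (2*n+1), (i:ℕ) = 2*n → t i = wl := by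
        intro i h1; simp only [htdef]; rw [if_neg (by omega), if_pos h1]
      have htlt : ∀ j : ℕ, 1 ≤ j → j ≤ 2*n - 1 → θ₀ < wf (K + j - 1) ∧ wf (K + j - 1) < wl := by
        intro j hj1 hj2
        constructor
        · calc θ₀ = zf K := hcase
            _ ≤ zf (K + j - 1) := hzle _ _ (by omega)
            _ < wf (K + j - 1) := (hwf1 _).1
        · calc wf (K + j - 1) < zf (K + j - 1 + 1) := (hwf1 _).2
            _ ≤ zf (K + 2*n - 1) := hzle _ _ (by omega)
            _ < wl := hwl1.1
      have hθ₀wl : θ₀ < wl := by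
        calc θ₀ = zf K := hcase
          _ ≤ zf (K + 2*n - 1) := hzle _ _ (by omega)
          _ < wl := hwl1.1
      have hwl2π : wl < θ₀ + 2*π := by
        have := hwl1.2; rw [← hcase] at this; exact this
      have htmono : ∀ i j : Fin (2*n+1), (i:ℕ) < (j:ℕ) → t i < t j := by
        intro i j hij
        rcases Nat.eq_zero_or_pos (i:ℕ) with hi0 | hi1
        · rw [htv0 i hi0]
          by_cases hj2 : (j:ℕ) = 2*n
          · rw [htv2 j hj2]; exact hθ₀wl
          · rw [ht0 j (by omega) hj2]
            exact (htlt (j:ℕ) (by omega) (by have := j.isLt; omega)).1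
        · have hi2 : (i:ℕ) ≠ 2*n := by have := j.isLt; omega
          rw [ht0 i (by omega) hi2]
          by_cases hj2 : (j:ℕ) = 2*n
          · rw [htv2 j hj2]
            exact (htlt (i:ℕ) (by omega) (by omega)).2
          · rw [ht0 j (by omega) hj2]
            exact hwfsm _ _ (by omega)
      have htinj : Function.Injective t := by
        intro i j hij
        by_contra hne
        rcases Nat.lt_or_ge (i:ℕ) (j:ℕ) with hlt | hge
        · exact absurd hij (ne_of_lt (htmono i j hlt))
        · have : (j:ℕ) < (i:ℕ) := by
            rcases Nat.eq_or_lt_of_le hge with he | hlt2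
            · exact absurd (Fin.ext he.symm) hne
            · exact hlt2
          exact absurd hij.symm (ne_of_lt (htmono j i this))
      have htmem : ∀ i : Fin (2*n+1), t i ∈ Set.Ico θ₀ (θ₀ + 2*π) := by
        intro i
        by_cases hi0 : (i:ℕ) = 0
        · rw [htv0 i hi0]; exact ⟨le_refl _, by linarith⟩
        by_cases hi2 : (i:ℕ) = 2*n
        · rw [htv2 i hi2]
          exact ⟨le_of_lt hθ₀wl, hwl2π⟩
        · rw [ht0 i hi0 hi2]
          have h1 := (htlt (i:ℕ) (by omega) (by have := i.isLt; omega)).1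
          have h2 := (htlt (i:ℕ) (by omega) (by have := i.isLt; omega)).2
          exact ⟨le_of_lt h1, by linarith⟩
      have htd : ∀ i : Fin (2*n+1), d (t i) = 0 := by
        intro i
        by_cases hi0 : (i:ℕ) = 0
        · rw [htv0 i hi0]; exact hdθ₀
        by_cases hi2 : (i:ℕ) = 2*n
        · rw [htv2 i hi2]; exact hwl2
        · rw [ht0 i hi0 hi2]; exact hwf2 _
      have hG0 : Gpoly n p c φv = 0 := by
        apply poly_zero_of_many_roots (2*n) _ (Gpoly_natDegree_le n p c φv hn hdeg) θ₀ t htinj htmem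
        intro i
        rw [Gpoly_eval n p c φv hn hdeg (t i)]
        have := htd i
        rw [hddef] at this
        simp only at this
        rw [this]
        simp
      have hd0 : ∀ θ : ℝ, d θ = 0 := by
        intro θ
        have he := Gpoly_eval n p c φv hn hdeg θ
        rw [hG0] at he
        simp only [Polynomial.eval_zero] at he
        have hne1 : (2:ℂ) * Complex.I * Complex.exp ((θ:ℂ)*Complex.I)^n ≠ 0 := by
          apply mul_ne_zero (mul_ne_zero two_ne_zero Complex.I_ne_zero)
          exact pow_ne_zero _ (Complex.exp_ne_zero _)
        rcases mul_eq_zero.mp he.symm with hbad | hgood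
        · exact absurd hbad hne1
        · have hre : (-(c*(n:ℝ)) * Real.sin ((n:ℝ)*θ+φv)
              + Real.sin θ * (Polynomial.derivative p).eval (Real.cos θ)) = 0 := by
            exact_mod_cast hgood
          rw [hddef]; exact hre
      have hconst : h (θf K) = h (θf (K+1)) :=
        is_const_of_deriv_eq_zero hdiff (fun θ => by rw [(hderiv θ).deriv, hd0 θ]) _ _
      rw [hhθf K, hhθf (K+1), hsucc K] at hconst
      have b1 := abs_le.mp (hbnd2 (θf K))
      have b2 := abs_le.mp (hbnd2 (θf (K+1)))
      rcases hsk K with hs | hs <;> rw [hs] at hconst <;> linarith [b1.1, b1.2, b2.1, b2.2]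
    · -- Case A : θ₀ is NOT the zero zf K; use zeros of h and Hpoly
      set t : Fin (2*n+1) → ℝ := fun i =>
        if (i:ℕ) = 0 then θ₀ else zf (K + (i:ℕ) - 1) with htdef
      have ht0 : ∀ i : Fin (2*n+1), (i:ℕ) ≠ 0 → t i = zf (K + (i:ℕ) - 1) := by
        intro i h1; simp only [htdef]; rw [if_neg h1]
      have htv0 : ∀ i : Fin (2*n+1), (i:ℕ) = 0 → t i = θ₀ := by
        intro i h1; simp only [htdef]; rw [if_pos h1]
      have hθ₀z : ∀ j : ℕ, 2 ≤ j → θ₀ < zf (K + j - 1) := by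
        intro j hj
        calc θ₀ < θf (K+1) := hK2
          _ ≤ θf (K + j - 1) := hθfle _ _ (by omega)
          _ < zf (K + j - 1) := (hzf1 _).1
      have htinj : Function.Injective t := by
        intro i j hij
        by_contra hne
        have hne' : (i:ℕ) ≠ (j:ℕ) := fun hc => hne (Fin.ext hc)
        -- wlog via symmetric argument: show any two distinct indices give distinct values
        have main : ∀ i j : Fin (2*n+1), (i:ℕ) < (j:ℕ) → t i ≠ t j := by
          intro i j hij2
          rcases Nat.eq_zero_or_pos (i:ℕ) with hi0 | hi1
          · rw [htv0 i hi0, ht0 j (by omega)]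
            rcases Nat.lt_or_ge (j:ℕ) 2 with hj2 | hj2
            · have : (j:ℕ) = 1 := by omega
              rw [this]
              simpa using hcase
            · exact ne_of_lt (hθ₀z (j:ℕ) hj2)
          · rw [ht0 i (by omega), ht0 j (by omega)]
            exact ne_of_lt (hzsm _ _ (by omega))
        rcases Nat.lt_or_ge (i:ℕ) (j:ℕ) with hlt | hge
        · exact absurd hij (main i j hlt)
        · exact absurd hij.symm (main j i (by omega))
      have htmem : ∀ i : Fin (2*n+1), t i ∈ Set.Ico (θf K) (θf K + 2*π) := by
        intro i
        by_cases hi0 : (i:ℕ) = 0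
        · rw [htv0 i hi0]
          refine ⟨hK1, ?_⟩
          calc θ₀ < θf (K+1) := hK2
            _ ≤ θf (K+2*n) := hθfle _ _ (by omega)
            _ = θf K + 2*π := hθfK2π
        · rw [ht0 i hi0]
          have hup : zf (K + (i:ℕ) - 1) < θf (K + (i:ℕ) - 1 + 1) := (hzf1 _).2
          refine ⟨le_trans (hθfle _ _ (by omega)) (le_of_lt (hzf1 _).1), ?_⟩
          calc zf (K + (i:ℕ) - 1) < θf (K + (i:ℕ) - 1 + 1) := hup
            _ ≤ θf (K + 2*n) := hθfle _ _ (by have := i.isLt; omega)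
            _ = θf K + 2*π := hθfK2π
      have hth : ∀ i : Fin (2*n+1), h (t i) = 0 := by
        intro i
        by_cases hi0 : (i:ℕ) = 0
        · rw [htv0 i hi0]; exact hhθ₀
        · rw [ht0 i hi0]; exact hzf2 _
      have hH0 : Hpoly n p c φv = 0 := by
        apply poly_zero_of_many_roots (2*n) _ (Hpoly_natDegree_le n p c φv hdeg) (θf K) t htinj htmem
        intro i
        rw [Hpoly_eval n p c φv hdeg (t i)]
        have := hth i
        rw [hhdef] at this
        simp only at this
        rw [this]
        simp
      have hh0 : h (θf K) = 0 := by
        have he := Hpoly_eval n p c φv hdeg (θf K)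
        rw [hH0] at he
        simp only [Polynomial.eval_zero] at he
        have hne1 : (2:ℂ) * Complex.exp ((θf K)*Complex.I)^n ≠ 0 :=
          mul_ne_zero two_ne_zero (pow_ne_zero _ (Complex.exp_ne_zero _))
        have hne1' : (2:ℂ) * Complex.exp (((θf K):ℂ)*Complex.I)^n ≠ 0 :=
          mul_ne_zero two_ne_zero (pow_ne_zero _ (Complex.exp_ne_zero _))
        rcases mul_eq_zero.mp he.symm with hbad | hgood
        · exact absurd hbad hne1'
        · have hre : (c * Real.cos ((n:ℝ)*(θf K)+φv) - p.eval (Real.cos (θf K))) = 0 := by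
            exact_mod_cast hgood
          rw [hhdef]; exact hre
      exact hznotzero hh0

  -- finish from key
  rw [le_div_iff₀ (Real.sqrt_pos.mpr h1x)]
  have e1 : |(Polynomial.derivative p).eval x| * Real.sqrt (1 - x^2) = |B| := by
    rw [hB, ← hsinθ₀, abs_mul, abs_of_nonneg (le_of_lt hsinpos), mul_comm]
  rw [e1]
  have h1A : (0:ℝ) ≤ 1 - A^2 := by linarith
  have e2 : ((n:ℝ) * Real.sqrt (1 - A^2))^2 = (n:ℝ)^2 * (1 - A^2) := by
    rw [mul_pow, Real.sq_sqrt h1A]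
  have e3 : |B|^2 ≤ ((n:ℝ) * Real.sqrt (1 - A^2))^2 := by
    rw [sq_abs, e2, show (n:ℝ)^2*(1-A^2) = (n:ℝ)^2 - (n:ℝ)^2*A^2 by ring]
    linarith [key]
  calc |B| = Real.sqrt (|B|^2) := by rw [Real.sqrt_sq (abs_nonneg B)]
    _ ≤ Real.sqrt (((n:ℝ) * Real.sqrt (1 - A^2))^2) := Real.sqrt_le_sqrt e3
    _ = (n:ℝ) * Real.sqrt (1 - A^2) := Real.sqrt_sq (by positivity)
end
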